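/- For the Lie algebra $G_2$, the number of distinct weights of the finite-dimensional irreducible module with highest weight $\lambda = \lambda_1\omega_1 + \lambda_2\omega_2$ (with $\lambda_1, \lambda_2 \in \mathbb{N}_0$) equals $1 + 3(\lambda_1+\lambda_2) + 3(3\lambda_1^2 + \lambda_2^2 + 4\lambda_1\lambda_2)$. In particular, this number is congruent to $1$ modulo $6$. -/

import Mathlib

/-- The simple root `α_i`, written in fundamental-weight (Dynkin-label) coordinates:
its `j`-th Dynkin label is the Cartan matrix entry `A_{ji} = ⟨α_j^∨, α_i⟩`. -/
def colRoot {r : ℕ} (A : Fin r → Fin r → ℤ) (i : Fin r) : Fin r → ℤ := fun j => A j i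

/-- The simple reflection `s_i` on the weight lattice: `s_i(μ) = μ - μ_i α_i`. -/
def simpleRefl {r : ℕ} (A : Fin r → Fin r → ℤ) (i : Fin r) :
    (Fin r → ℤ) → (Fin r → ℤ) :=
  fun μ => μ - μ i • colRoot A i

/-- The Weyl group of the Cartan matrix `A`, realized as the monoid of maps of the weight
lattice generated by the simple reflections (for a finite Weyl group, which consists of
involutions, this closure coincides with the generated group). -/
def weylMonoid {r : ℕ} (A : Fin r → Fin r → ℤ) : Submonoid (Function.End (Fin r → ℤ)) :=
  Submonoid.closure (Set.range (simpleRefl A))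

/-- `μ ≤ λ` in the dominance (root) order: `λ - μ` is a non-negative integer combination
of the simple roots. -/
def rootLE {r : ℕ} (A : Fin r → Fin r → ℤ) (μ lam : Fin r → ℤ) : Prop :=
  ∃ n : Fin r → ℕ, lam = μ + ∑ i, (n i : ℤ) • colRoot A i

/-- The set `P(λ)` of distinct weights of the finite-dimensional irreducible
highest-weight module `L(λ)`: by the classical saturation theorem, for dominant integral
`λ` these are exactly the integral weights `μ` all of whose Weyl conjugates satisfy
`w(μ) ≤ λ` in the dominance order. -/
def weightSet {r : ℕ} (A : Fin r → Fin r → ℤ) (lam : Fin r → ℤ) : Set (Fin r → ℤ) :=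
  {μ | ∀ w ∈ weylMonoid A, rootLE A (w μ) lam}

/-- The Cartan matrix of `G₂`, with `α₁` the long simple root. -/
def cartanG2 : Fin 2 → Fin 2 → ℤ := ![![2, -1], ![-3, 2]]

lemma s0_0 (μ : Fin 2 → ℤ) : simpleRefl cartanG2 0 μ 0 = -μ 0 := by
  simp [simpleRefl, colRoot, cartanG2]; try ring

lemma s0_1 (μ : Fin 2 → ℤ) : simpleRefl cartanG2 0 μ 1 = 3 * μ 0 + μ 1 := by
  simp [simpleRefl, colRoot, cartanG2]; try ring

lemma s1_0 (μ : Fin 2 → ℤ) : simpleRefl cartanG2 1 μ 0 = μ 0 + μ 1 := by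
  simp [simpleRefl, colRoot, cartanG2]; try ring

lemma s1_1 (μ : Fin 2 → ℤ) : simpleRefl cartanG2 1 μ 1 = -μ 1 := by
  simp [simpleRefl, colRoot, cartanG2]; try ring

lemma rootLE_iff (l1 l2 : ℕ) (ν : Fin 2 → ℤ) :
    rootLE cartanG2 ν ![(l1 : ℤ), (l2 : ℤ)] ↔
      2 * ν 0 + ν 1 ≤ 2 * l1 + l2 ∧ 3 * ν 0 + 2 * ν 1 ≤ 3 * l1 + 2 * l2 := by
  constructor
  · rintro ⟨n, h⟩
    have h0 := congrFun h 0
    have h1 := congrFun h 1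
    simp [colRoot, cartanG2, Fin.sum_univ_two] at h0 h1
    omega
  · rintro ⟨h1, h2⟩
    refine ⟨![(2 * (l1 - ν 0) + (l2 - ν 1)).toNat, (3 * (l1 - ν 0) + 2 * (l2 - ν 1)).toNat], ?_⟩
    funext j
    fin_cases j <;> simp [colRoot, cartanG2, Fin.sum_univ_two] <;> omega

def inH (c1 c2 x y : ℤ) : Prop :=
  x ≤ c1 ∧ -c1 ≤ x ∧ x + y ≤ c1 ∧ -c1 ≤ x + y ∧ 2*x + y ≤ c1 ∧ -c1 ≤ 2*x + y ∧
  y ≤ c2 ∧ -c2 ≤ y ∧ 3*x + y ≤ c2 ∧ -c2 ≤ 3*x + y ∧ 3*x + 2*y ≤ c2 ∧ -c2 ≤ 3*x + 2*y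

lemma end_mul_apply (f g : (Fin 2 → ℤ) → (Fin 2 → ℤ)) (v : Fin 2 → ℤ) :
    (HMul.hMul (α := Function.End (Fin 2 → ℤ)) (β := Function.End (Fin 2 → ℤ))
      (γ := Function.End (Fin 2 → ℤ)) f g) v = f (g v) := rfl

lemma end_mul_apply' (f : Function.End (Fin 2 → ℤ)) (g : (Fin 2 → ℤ) → (Fin 2 → ℤ))
    (v : Fin 2 → ℤ) :
    (HMul.hMul (α := Function.End (Fin 2 → ℤ)) (β := Function.End (Fin 2 → ℤ))
      (γ := Function.End (Fin 2 → ℤ)) f g) v = f (g v) := rfl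

lemma weight_mem_inH (l1 l2 : ℕ) (μ : Fin 2 → ℤ)
    (h : μ ∈ weightSet cartanG2 ![(l1 : ℤ), (l2 : ℤ)]) :
    inH (2*l1+l2) (3*l1+2*l2) (μ 0) (μ 1) := by
  have m0 : simpleRefl cartanG2 0 ∈ weylMonoid cartanG2 :=
    Submonoid.subset_closure (Set.mem_range_self 0)
  have m1 : simpleRefl cartanG2 1 ∈ weylMonoid cartanG2 :=
    Submonoid.subset_closure (Set.mem_range_self 1)
  have H : ∀ w ∈ weylMonoid cartanG2,
      2 * (w μ) 0 + (w μ) 1 ≤ 2*l1+l2 ∧ 3 * (w μ) 0 + 2 * (w μ) 1 ≤ 3*l1+2*l2 :=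
    fun w hw => (rootLE_iff l1 l2 (w μ)).mp (h w hw)
  have h1 := H 1 (one_mem _)
  have h2 := H _ m0
  have h3 := H _ m1
  have h4 := H _ (mul_mem m0 m1)
  have h5 := H _ (mul_mem m1 m0)
  have h6 := H _ (mul_mem (mul_mem m0 m1) m0)
  have h7 := H _ (mul_mem (mul_mem m1 m0) m1)
  have h8 := H _ (mul_mem (mul_mem (mul_mem m0 m1) m0) m1)
  have h9 := H _ (mul_mem (mul_mem (mul_mem m1 m0) m1) m0)
  have h10 := H _ (mul_mem (mul_mem (mul_mem (mul_mem m0 m1) m0) m1) m0)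
  have h11 := H _ (mul_mem (mul_mem (mul_mem (mul_mem m1 m0) m1) m0) m1)
  simp only [end_mul_apply, end_mul_apply', Function.End.one_def, id_eq, s0_0, s0_1, s1_0, s1_1]
    at h1 h2 h3 h4 h5 h6 h7 h8 h9 h10 h11
  unfold inH
  omega

lemma inH_mem_weight (l1 l2 : ℕ) (μ : Fin 2 → ℤ)
    (h : inH (2*l1+l2) (3*l1+2*l2) (μ 0) (μ 1)) :
    μ ∈ weightSet cartanG2 ![(l1 : ℤ), (l2 : ℤ)] := by
  have key : ∀ w ∈ weylMonoid cartanG2, ∀ ν : Fin 2 → ℤ,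
      inH (2*l1+l2) (3*l1+2*l2) (ν 0) (ν 1) →
      inH (2*l1+l2) (3*l1+2*l2) ((w ν) 0) ((w ν) 1) := by
    intro w hw
    induction hw using Submonoid.closure_induction with
    | mem x hx =>
      obtain ⟨i, rfl⟩ := hx
      fin_cases i <;> intro ν hν
      · show inH _ _ (simpleRefl cartanG2 0 ν 0) (simpleRefl cartanG2 0 ν 1)
        rw [s0_0, s0_1]; unfold inH at *; omega
      · show inH _ _ (simpleRefl cartanG2 1 ν 0) (simpleRefl cartanG2 1 ν 1)
        rw [s1_0, s1_1]; unfold inH at *; omega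
    | one => exact fun ν hν => hν
    | mul x y hx hy ihx ihy => exact fun ν hν => ihx _ (ihy _ hν)
  intro w hw
  rw [rootLE_iff]
  have := key w hw μ h
  unfold inH at this
  exact ⟨this.2.2.2.2.1, this.2.2.2.2.2.2.2.2.2.2.1⟩
def hi (l1 l2 : ℕ) (x : ℤ) : ℤ :=
  min (3*(l1:ℤ) + 2*l2) (min (2*(l1:ℤ) + l2 - x) (min (2*(l1:ℤ) + l2 - 2*x)
    (min (3*(l1:ℤ) + 2*l2 - 3*x) ((3*(l1:ℤ) + 2*l2 - 3*x)/2))))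

noncomputable def zslice (l1 l2 : ℕ) (x : ℤ) : Finset (ℤ × ℤ) :=
  (Finset.Icc (-(hi l1 l2 (-x))) (hi l1 l2 x)).map
    ⟨fun y => (x, y), fun a b hab => by simpa using hab⟩

noncomputable def hexF (l1 l2 : ℕ) : Finset (ℤ × ℤ) :=
  (Finset.Icc (-(2*(l1:ℤ) + l2)) (2*(l1:ℤ) + l2)).biUnion (zslice l1 l2)

lemma mem_hexF (l1 l2 : ℕ) (p : ℤ × ℤ) :
    p ∈ hexF l1 l2 ↔ inH (2*l1+l2) (3*l1+2*l2) p.1 p.2 := by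
  rcases p with ⟨x, y⟩
  simp only [hexF, zslice, Finset.mem_biUnion, Finset.mem_map, Finset.mem_Icc,
    Function.Embedding.coeFn_mk, Prod.mk.injEq]
  constructor
  · rintro ⟨x', hx', y', hy', rfl, rfl⟩
    unfold hi at hy'
    unfold inH
    omega
  · intro hp
    unfold inH at hp
    exact ⟨x, by omega, y, by unfold hi; omega, rfl⟩

lemma card_slice (l1 l2 : ℕ) (x : ℤ) :
    (zslice l1 l2 x).card = (hi l1 l2 x + 1 + hi l1 l2 (-x)).toNat := by
  rw [zslice, Finset.card_map, Int.card_Icc]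
  congr 1; ring

lemma hi_add_nonneg (l1 l2 : ℕ) (x : ℤ)
    (h1 : -(2*(l1:ℤ) + l2) ≤ x) (h2 : x ≤ 2*(l1:ℤ) + l2) :
    0 ≤ hi l1 l2 x + 1 + hi l1 l2 (-x) := by
  unfold hi; omega

lemma invol_sum (a b K : ℤ) (hab : a ≤ b) (g : ℤ → ℤ)
    (h : ∀ x, a < x → x ≤ b → g x + g (a + b + 1 - x) = K) :
    2 * ∑ x ∈ Finset.Ioc a b, g x = (b - a) * K := by
  have h1 : ∑ x ∈ Finset.Ioc a b, g x = ∑ x ∈ Finset.Ioc a b, g (a + b + 1 - x) := by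
    refine Finset.sum_nbij' (fun x => a + b + 1 - x) (fun x => a + b + 1 - x) ?_ ?_ ?_ ?_ ?_
    · intro t ht; simp only [Finset.mem_Ioc] at *; omega
    · intro t ht; simp only [Finset.mem_Ioc] at *; omega
    · intro t ht; ring
    · intro t ht; ring
    · intro t ht; congr 1; ring
  have h2 : 2 * ∑ x ∈ Finset.Ioc a b, g x
      = ∑ x ∈ Finset.Ioc a b, (g x + g (a + b + 1 - x)) := by
    rw [Finset.sum_add_distrib, ← h1]; ring
  rw [h2, Finset.sum_congr rfl (fun x hx => by
    rw [h x (Finset.mem_Ioc.mp hx).1 (Finset.mem_Ioc.mp hx).2]),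
    Finset.sum_const, Int.card_Ioc, nsmul_eq_mul, Int.toNat_of_nonneg (by omega)]

lemma gA (l1 l2 : ℕ) (x : ℤ) (h1 : -(2*(l1:ℤ) + l2) - 1 < x) (h2 : x ≤ -(l1:ℤ) - l2) :
    hi l1 l2 x + 1 + hi l1 l2 (-x) = (3*(l1:ℤ) + 2*l2) + 1 + (3*(l1:ℤ) + 2*l2 + 3*x) := by
  unfold hi; omega

lemma gB (l1 l2 : ℕ) (x : ℤ) (h1 : -(l1:ℤ) - l2 < x) (h2 : x ≤ -(l1:ℤ)) :
    hi l1 l2 x + 1 + hi l1 l2 (-x) = (2*(l1:ℤ) + l2 - x) + 1 + (2*(l1:ℤ) + l2 + 2*x) := by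
  unfold hi; omega

lemma gC (l1 l2 : ℕ) (x : ℤ) (h1 : -(l1:ℤ) < x) (h2 : x ≤ (l1:ℤ)) :
    hi l1 l2 x + 1 + hi l1 l2 (-x)
      = (3*(l1:ℤ) + 2*l2 - 3*x)/2 + 1 + (3*(l1:ℤ) + 2*l2 + 3*x)/2 := by
  unfold hi; omega

lemma gD (l1 l2 : ℕ) (x : ℤ) (h1 : (l1:ℤ) < x) (h2 : x ≤ (l1:ℤ) + l2) :
    hi l1 l2 x + 1 + hi l1 l2 (-x) = (2*(l1:ℤ) + l2 - 2*x) + 1 + (2*(l1:ℤ) + l2 + x) := by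
  unfold hi; omega

lemma gE (l1 l2 : ℕ) (x : ℤ) (h1 : (l1:ℤ) + l2 < x) (h2 : x ≤ 2*(l1:ℤ) + l2) :
    hi l1 l2 x + 1 + hi l1 l2 (-x) = (3*(l1:ℤ) + 2*l2 - 3*x) + 1 + (3*(l1:ℤ) + 2*l2) := by
  unfold hi; omega


lemma card_hexF (l1 l2 : ℕ) :
    (hexF l1 l2).card = 1 + 3*(l1+l2) + 3*(3*l1^2 + l2^2 + 4*l1*l2) := by
  have hdisj : ∀ x ∈ Finset.Icc (-(2*(l1:ℤ) + l2)) (2*(l1:ℤ) + l2),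
      ∀ y ∈ Finset.Icc (-(2*(l1:ℤ) + l2)) (2*(l1:ℤ) + l2), x ≠ y →
      Disjoint (zslice l1 l2 x) (zslice l1 l2 y) := by
    intro x _ y _ hxy
    refine Finset.disjoint_left.mpr ?_
    rintro ⟨a, b⟩ ha hb
    simp only [zslice, Finset.mem_map, Function.Embedding.coeFn_mk, Prod.mk.injEq] at ha hb
    obtain ⟨_, _, rfl, _⟩ := ha
    obtain ⟨_, _, rfl, _⟩ := hb
    exact hxy rfl
  have h1 : ((hexF l1 l2).card : ℤ)
      = ∑ x ∈ Finset.Icc (-(2*(l1:ℤ) + l2)) (2*(l1:ℤ) + l2),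
          (hi l1 l2 x + 1 + hi l1 l2 (-x)) := by
    rw [hexF, Finset.card_biUnion hdisj, Nat.cast_sum]
    refine Finset.sum_congr rfl ?_
    intro x hx
    rw [card_slice]
    exact Int.toNat_of_nonneg (hi_add_nonneg l1 l2 x (Finset.mem_Icc.mp hx).1
      (Finset.mem_Icc.mp hx).2)
  have e0 : Finset.Icc (-(2*(l1:ℤ) + l2)) (2*(l1:ℤ) + l2)
      = Finset.Ioc (-(2*(l1:ℤ) + l2) - 1) (2*(l1:ℤ) + l2) := by
    ext t; simp only [Finset.mem_Icc, Finset.mem_Ioc]; omega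
  have hsplit : Finset.Ioc (-(2*(l1:ℤ) + l2) - 1) (2*(l1:ℤ) + l2)
      = (((Finset.Ioc (-(2*(l1:ℤ) + l2) - 1) (-(l1:ℤ) - l2)
          ∪ Finset.Ioc (-(l1:ℤ) - l2) (-(l1:ℤ)))
          ∪ Finset.Ioc (-(l1:ℤ)) (l1:ℤ))
          ∪ Finset.Ioc (l1:ℤ) ((l1:ℤ) + l2))
          ∪ Finset.Ioc ((l1:ℤ) + l2) (2*(l1:ℤ) + l2) := by
    ext t; simp only [Finset.mem_Ioc, Finset.mem_union]; omega
  have d1 : Disjoint (Finset.Ioc (-(2*(l1:ℤ) + l2) - 1) (-(l1:ℤ) - l2))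
      (Finset.Ioc (-(l1:ℤ) - l2) (-(l1:ℤ))) := by
    rw [Finset.disjoint_left]; intro t ht ht'
    simp only [Finset.mem_Ioc] at ht ht'; omega
  have d2 : Disjoint (Finset.Ioc (-(2*(l1:ℤ) + l2) - 1) (-(l1:ℤ) - l2)
      ∪ Finset.Ioc (-(l1:ℤ) - l2) (-(l1:ℤ))) (Finset.Ioc (-(l1:ℤ)) (l1:ℤ)) := by
    rw [Finset.disjoint_left]; intro t ht ht'
    simp only [Finset.mem_Ioc, Finset.mem_union] at ht ht'; omega
  have d3 : Disjoint ((Finset.Ioc (-(2*(l1:ℤ) + l2) - 1) (-(l1:ℤ) - l2)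
      ∪ Finset.Ioc (-(l1:ℤ) - l2) (-(l1:ℤ))) ∪ Finset.Ioc (-(l1:ℤ)) (l1:ℤ))
      (Finset.Ioc (l1:ℤ) ((l1:ℤ) + l2)) := by
    rw [Finset.disjoint_left]; intro t ht ht'
    simp only [Finset.mem_Ioc, Finset.mem_union] at ht ht'; omega
  have d4 : Disjoint (((Finset.Ioc (-(2*(l1:ℤ) + l2) - 1) (-(l1:ℤ) - l2)
      ∪ Finset.Ioc (-(l1:ℤ) - l2) (-(l1:ℤ))) ∪ Finset.Ioc (-(l1:ℤ)) (l1:ℤ))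
      ∪ Finset.Ioc (l1:ℤ) ((l1:ℤ) + l2)) (Finset.Ioc ((l1:ℤ) + l2) (2*(l1:ℤ) + l2)) := by
    rw [Finset.disjoint_left]; intro t ht ht'
    simp only [Finset.mem_Ioc, Finset.mem_union] at ht ht'; omega
  have hS1 : 2 * ∑ x ∈ Finset.Ioc (-(2*(l1:ℤ) + l2) - 1) (-(l1:ℤ) - l2),
      (hi l1 l2 x + 1 + hi l1 l2 (-x))
      = ((-(l1:ℤ) - l2) - (-(2*(l1:ℤ) + l2) - 1)) * (3*(l1:ℤ) + 2*l2 + 2) := by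
    refine invol_sum _ _ _ (by omega) _ ?_
    intro x hx1 hx2
    rw [gA l1 l2 x (by omega) (by omega), gA l1 l2 _ (by omega) (by omega)]
    omega
  have hS2 : 2 * ∑ x ∈ Finset.Ioc (-(l1:ℤ) - l2) (-(l1:ℤ)),
      (hi l1 l2 x + 1 + hi l1 l2 (-x))
      = ((-(l1:ℤ)) - (-(l1:ℤ) - l2)) * (3*(2*(l1:ℤ) + l2) + 3) := by
    refine invol_sum _ _ _ (by omega) _ ?_
    intro x hx1 hx2
    rw [gB l1 l2 x (by omega) (by omega), gB l1 l2 _ (by omega) (by omega)]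
    omega
  have hS3 : 2 * ∑ x ∈ Finset.Ioc (-(l1:ℤ)) (l1:ℤ),
      (hi l1 l2 x + 1 + hi l1 l2 (-x))
      = ((l1:ℤ) - (-(l1:ℤ))) * (2*(3*(l1:ℤ) + 2*l2) + 1) := by
    refine invol_sum _ _ _ (by omega) _ ?_
    intro x hx1 hx2
    rw [show -(l1:ℤ) + (l1:ℤ) + 1 - x = 1 - x by ring]
    rw [gC l1 l2 x (by omega) (by omega), gC l1 l2 (1-x) (by omega) (by omega)]
    have p1 : (3*(l1:ℤ) + 2*l2 - 3*x)/2 + (3*(l1:ℤ) + 2*l2 - 3*(1-x))/2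
        = 3*(l1:ℤ) + 2*l2 - 2 := by omega
    have p2 : (3*(l1:ℤ) + 2*l2 + 3*x)/2 + (3*(l1:ℤ) + 2*l2 + 3*(1-x))/2
        = 3*(l1:ℤ) + 2*l2 + 1 := by omega
    omega
  have hS4 : 2 * ∑ x ∈ Finset.Ioc (l1:ℤ) ((l1:ℤ) + l2),
      (hi l1 l2 x + 1 + hi l1 l2 (-x))
      = (((l1:ℤ) + l2) - (l1:ℤ)) * (3*(2*(l1:ℤ) + l2) + 1) := by
    refine invol_sum _ _ _ (by omega) _ ?_
    intro x hx1 hx2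
    rw [gD l1 l2 x (by omega) (by omega), gD l1 l2 _ (by omega) (by omega)]
    omega
  have hS5 : 2 * ∑ x ∈ Finset.Ioc ((l1:ℤ) + l2) (2*(l1:ℤ) + l2),
      (hi l1 l2 x + 1 + hi l1 l2 (-x))
      = ((2*(l1:ℤ) + l2) - ((l1:ℤ) + l2)) * (3*(l1:ℤ) + 2*l2 - 1) := by
    refine invol_sum _ _ _ (by omega) _ ?_
    intro x hx1 hx2
    rw [gE l1 l2 x (by omega) (by omega), gE l1 l2 _ (by omega) (by omega)]
    omega
  have key : ((hexF l1 l2).card : ℤ)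
      = 1 + 3*((l1:ℤ) + l2) + 3*(3*(l1:ℤ)^2 + (l2:ℤ)^2 + 4*l1*l2) := by
    have h2 : 2 * ((hexF l1 l2).card : ℤ)
        = 2 * (1 + 3*((l1:ℤ) + l2) + 3*(3*(l1:ℤ)^2 + (l2:ℤ)^2 + 4*l1*l2)) := by
      rw [h1, e0, hsplit, Finset.sum_union d4, Finset.sum_union d3, Finset.sum_union d2,
        Finset.sum_union d1]
      rw [mul_add, mul_add, mul_add, mul_add, hS1, hS2, hS3, hS4, hS5]
      ring
    linarith
  exact_mod_cast key

/-- for `G₂`, the number of distinct weights of the irreducible module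
`L(λ₁ω₁ + λ₂ω₂)` (with `λ₁, λ₂ ∈ ℕ`) equals `1 + 3(λ₁+λ₂) + 3(3λ₁² + λ₂² + 4λ₁λ₂)`;
in particular, this number is congruent to `1` modulo `6`. -/
theorem stmt_4 (l1 l2 : ℕ) :
    (weightSet cartanG2 ![(l1 : ℤ), (l2 : ℤ)]).ncard
        = 1 + 3 * (l1 + l2) + 3 * (3 * l1^2 + l2^2 + 4 * l1 * l2) ∧
    (weightSet cartanG2 ![(l1 : ℤ), (l2 : ℤ)]).ncard % 6 = 1 := by
  have himg : weightSet cartanG2 ![(l1 : ℤ), (l2 : ℤ)]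
      = (fun p : ℤ × ℤ => (![p.1, p.2] : Fin 2 → ℤ)) '' ↑(hexF l1 l2) := by
    ext μ
    constructor
    · intro h
      refine ⟨(μ 0, μ 1), ?_, ?_⟩
      · exact Finset.mem_coe.mpr ((mem_hexF l1 l2 _).mpr (weight_mem_inH l1 l2 μ h))
      · funext j; fin_cases j <;> rfl
    · rintro ⟨⟨x, y⟩, hp, rfl⟩
      apply inH_mem_weight
      have := (mem_hexF l1 l2 _).mp (Finset.mem_coe.mp hp)
      simpa using this
  have hinj : Function.Injective (fun p : ℤ × ℤ => (![p.1, p.2] : Fin 2 → ℤ)) := by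
    rintro ⟨a, b⟩ ⟨c, d⟩ h
    have h0 := congrFun h 0
    have h1 := congrFun h 1
    simp only [Matrix.cons_val_zero, Matrix.cons_val_one, Matrix.head_cons] at h0 h1
    exact Prod.ext h0 h1
  have hcard : (weightSet cartanG2 ![(l1 : ℤ), (l2 : ℤ)]).ncard
      = 1 + 3 * (l1 + l2) + 3 * (3 * l1^2 + l2^2 + 4 * l1 * l2) := by
    rw [himg, Set.ncard_image_of_injective _ hinj, Set.ncard_coe_finset, card_hexF]
  refine ⟨hcard, ?_⟩
  rw [hcard]
  have e1 : l1^2 % 2 = l1 % 2 := by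
    rw [Nat.pow_mod]
    rcases Nat.mod_two_eq_zero_or_one l1 with h | h <;> rw [h] <;> rfl
  have e2 : l2^2 % 2 = l2 % 2 := by
    rw [Nat.pow_mod]
    rcases Nat.mod_two_eq_zero_or_one l2 with h | h <;> rw [h] <;> rfl
  rw [show 4 * l1 * l2 = 4 * (l1 * l2) from by ring]
  obtain ⟨a, ha⟩ : ∃ a, l1^2 = a := ⟨_, rfl⟩
  obtain ⟨b, hb⟩ : ∃ b, l2^2 = b := ⟨_, rfl⟩
  obtain ⟨c, hc⟩ : ∃ c, l1 * l2 = c := ⟨_, rfl⟩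
  rw [ha] at e1
  rw [hb] at e2
  rw [ha, hb, hc]
  omega
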